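/- Let K be a field, m ≥ 3 and n ≥ 2m integers, k = ⌊(n+1)/(m+1)⌋, and 1 ≤ j ≤ k−1. Let L_j = (I_{n,m} : x_m x_{2m+1} ⋯ x_{j(m+1)−1}). Then the ideal U_{j+1} = L_j + (x_{(j+1)(m+1)−1}) equals the ideal of S generated by: for each 0 ≤ l ≤ j−1, the monomials u_i / x_{(l+1)(m+1)−1} for l(m+1)+1 ≤ i ≤ (l+1)(m+1)−1, together with the variable x_{(j+1)(m+1)−1} and the monomials u_i for (j+1)(m+1) ≤ i ≤ n−m+1. -/

import Mathlib

open MvPolynomial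

/-- Indicator exponent vector of a finite set of variables. -/
noncomputable def ind {n : ℕ} (s : Finset (Fin n)) : Fin n →₀ ℕ := ∑ a ∈ s, Finsupp.single a 1

lemma ind_apply {n : ℕ} (s : Finset (Fin n)) (a : Fin n) : ind s a = if a ∈ s then 1 else 0 := by
  classical
  simp [ind, Finsupp.finset_sum_apply, Finsupp.single_apply, Finset.sum_ite_eq' s a]

lemma prod_X_ind (K : Type) [Field K] {n : ℕ} (s : Finset (Fin n)) :
    (∏ a ∈ s, (X a : MvPolynomial (Fin n) K)) = monomial (ind s) 1 := by
  classical
  induction s using Finset.induction with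
  | empty => simp [ind]
  | insert _ _ h ih =>
    rw [Finset.prod_insert h, ih, X, monomial_mul, one_mul]
    simp [ind, Finset.sum_insert h]

lemma ind_le_ind {n : ℕ} {s t : Finset (Fin n)} (h : s ⊆ t) : ind s ≤ ind t := by
  intro a
  simp only [ind_apply]
  split_ifs with h1 h2
  · exact le_rfl
  · exact absurd (h h1) h2
  · exact Nat.zero_le _
  · exact le_rfl

lemma ind_sub {n : ℕ} (s t : Finset (Fin n)) : ind s - ind t = ind (s \ t) := by
  ext a
  rw [Finsupp.tsub_apply]
  simp only [ind_apply, Finset.mem_sdiff]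
  split_ifs <;> simp_all

lemma monomial_mem_span {K : Type} [Field K] {n : ℕ} {E : Set (Fin n →₀ ℕ)} {d : Fin n →₀ ℕ}
    (h : ∃ e ∈ E, e ≤ d) : monomial d (1:K) ∈ Ideal.span ((fun e => monomial e (1:K)) '' E) := by
  classical
  rw [mem_ideal_span_monomial_image]
  intro xi hxi
  rw [support_monomial, if_neg one_ne_zero] at hxi
  simp only [Finset.mem_singleton] at hxi
  subst hxi; exact h

lemma span_mono_div {K : Type} [Field K] {n : ℕ} {E1 E2 : Set (Fin n →₀ ℕ)}
    (h : ∀ e ∈ E1, ∃ e' ∈ E2, e' ≤ e) :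
    Ideal.span ((fun e => monomial e (1:K)) '' E1) ≤
      Ideal.span ((fun e => monomial e (1:K)) '' E2) := by
  rw [Ideal.span_le]
  rintro _ ⟨e, he, rfl⟩
  exact monomial_mem_span (h e he)

lemma colon_monomial {K : Type} [Field K] {n : ℕ} (E : Set (Fin n →₀ ℕ)) (F : Fin n →₀ ℕ) :
    (Ideal.span ((fun e => monomial e (1:K)) '' E)).colon (Ideal.span {monomial F (1:K)} : Set (MvPolynomial (Fin n) K)) =
      Ideal.span ((fun e => monomial e (1:K)) '' ((· - F) '' E)) := by
  ext g
  rw [Ideal.mem_colon_span_singleton, mem_ideal_span_monomial_image, mem_ideal_span_monomial_image]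
  constructor
  · intro h d hd
    have hmem : d + F ∈ (g * monomial F (1:K)).support := by
      rw [mem_support_iff, coeff_mul_monomial, mul_one]
      exact mem_support_iff.mp hd
    obtain ⟨e, he, hle⟩ := h _ hmem
    exact ⟨e - F, ⟨e, he, rfl⟩, tsub_le_iff_right.mpr hle⟩
  · intro h d hd
    rw [mem_support_iff, coeff_mul_monomial'] at hd
    split_ifs at hd with hF
    · rw [mul_one] at hd
      obtain ⟨e', ⟨e, he, rfl⟩, hle⟩ := h (d - F) (mem_support_iff.mpr hd)
      refine ⟨e, he, ?_⟩
      calc e ≤ e - F + F := le_tsub_add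
        _ ≤ d - F + F := add_le_add_left hle F
        _ = d := tsub_add_cancel_of_le hF
    · exact absurd rfl hd

/-- The generator `u_i = x_i x_{i+1} ⋯ x_{i+m-1}` of the path ideal, where the
variables of `K[x_1,…,x_n]` are 1-indexed via `x_t = X ⟨t-1⟩`. -/
noncomputable def pathGen (K : Type) [Field K] (n m i : ℕ) : MvPolynomial (Fin n) K :=
  ∏ j ∈ Finset.univ.filter (fun j : Fin n => i ≤ (j : ℕ) + 1 ∧ (j : ℕ) + 1 < i + m),
    X j

/-- The monomial `u_i / x_p = ∏_{i ≤ l ≤ i+m-1, l ≠ p} x_l`. -/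
noncomputable def pathGenDiv (K : Type) [Field K] (n m i p : ℕ) : MvPolynomial (Fin n) K :=
  ∏ j ∈ Finset.univ.filter
      (fun j : Fin n => (i ≤ (j : ℕ) + 1 ∧ (j : ℕ) + 1 < i + m) ∧ (j : ℕ) + 1 ≠ p),
    X j

/-- The path ideal `I_{n,m} = (u_1, …, u_{n-m+1}) ⊆ K[x_1,…,x_n]` of the line graph. -/
noncomputable def pathIdeal (K : Type) [Field K] (n m : ℕ) : Ideal (MvPolynomial (Fin n) K) :=
  Ideal.span {q | ∃ i : ℕ, 1 ≤ i ∧ i ≤ n - m + 1 ∧ q = pathGen K n m i}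

/-- The variable `x_t` of `K[x_1,…,x_n]` (1-indexed; junk value `0` out of range). -/
noncomputable def xv (K : Type) [Field K] (n t : ℕ) : MvPolynomial (Fin n) K :=
  if h : 1 ≤ t ∧ t ≤ n then X (⟨t - 1, by omega⟩ : Fin n) else 0

def Sset (n m i : ℕ) : Finset (Fin n) :=
  Finset.univ.filter (fun a : Fin n => i ≤ (a : ℕ) + 1 ∧ (a : ℕ) + 1 < i + m)

def Dset (n m i p : ℕ) : Finset (Fin n) :=
  Finset.univ.filter (fun a : Fin n => (i ≤ (a : ℕ) + 1 ∧ (a : ℕ) + 1 < i + m) ∧ (a : ℕ) + 1 ≠ p)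

open Classical in
noncomputable def Fset (n m j : ℕ) : Finset (Fin n) :=
  Finset.univ.filter (fun a : Fin n => ∃ l ∈ Finset.Icc 1 j, (a : ℕ) + 1 = l * (m + 1) - 1)

lemma pathGen_eq (K : Type) [Field K] (n m i : ℕ) :
    pathGen K n m i = monomial (ind (Sset n m i)) (1 : K) := prod_X_ind K _

lemma pathGenDiv_eq (K : Type) [Field K] (n m i p : ℕ) :
    pathGenDiv K n m i p = monomial (ind (Dset n m i p)) (1 : K) := prod_X_ind K _

lemma xv_eq (K : Type) [Field K] (n t : ℕ) (h1 : 1 ≤ t) (h2 : t ≤ n) :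
    xv K n t = monomial (ind {(⟨t - 1, by omega⟩ : Fin n)}) (1 : K) := by
  rw [xv, dif_pos ⟨h1, h2⟩, X]
  congr 1
  simp [ind]

lemma memS {n m i : ℕ} {a : Fin n} :
    a ∈ Sset n m i ↔ i ≤ (a : ℕ) + 1 ∧ (a : ℕ) + 1 < i + m := by
  simp [Sset]

lemma memD {n m i p : ℕ} {a : Fin n} :
    a ∈ Dset n m i p ↔ (i ≤ (a : ℕ) + 1 ∧ (a : ℕ) + 1 < i + m) ∧ (a : ℕ) + 1 ≠ p := by
  simp [Dset]

lemma memF {n m j : ℕ} {a : Fin n} :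
    a ∈ Fset n m j ↔ ∃ l, (1 ≤ l ∧ l ≤ j) ∧ (a : ℕ) + 1 = l * (m + 1) - 1 := by
  simp [Fset, Finset.mem_Icc]

/-- If the window of `u_i` meets `F` exactly in `x_{(l+1)(m+1)-1}`. -/
lemma sdiff_eq_D (n m j : ℕ) (hm : 3 ≤ m) (l i : ℕ) (h1 : l + 1 ≤ j)
    (h2 : l * (m + 1) + 1 ≤ i) (h3 : i ≤ (l + 1) * (m + 1) - 1) :
    Sset n m i \ Fset n m j = Dset n m i ((l + 1) * (m + 1) - 1) := by
  have e1 : (l + 1) * (m + 1) = l * (m + 1) + (m + 1) := by ring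
  have e2 : (l + 2) * (m + 1) = l * (m + 1) + 2 * (m + 1) := by ring
  ext a
  simp only [Finset.mem_sdiff, memS, memD, memF]
  constructor
  · rintro ⟨hw, hnF⟩
    exact ⟨hw, fun hap => hnF ⟨l + 1, ⟨by omega, by omega⟩, hap⟩⟩
  · rintro ⟨hw, hne⟩
    refine ⟨hw, ?_⟩
    rintro ⟨l', ⟨hl'1, hl'2⟩, hl'3⟩
    have k1 : 1 * (m + 1) ≤ l' * (m + 1) := Nat.mul_le_mul_right _ hl'1
    have hlt1 : l * (m + 1) < l' * (m + 1) := by omega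
    have hlt2 : l' * (m + 1) < (l + 2) * (m + 1) := by omega
    have c1 := (Nat.mul_lt_mul_right (show 0 < m + 1 by omega)).mp hlt1
    have c2 := (Nat.mul_lt_mul_right (show 0 < m + 1 by omega)).mp hlt2
    have hll : l' = l + 1 := by omega
    subst hll
    exact hne (by omega)

/-- If `i > j(m+1)`, the window of `u_i` misses `F`. -/
lemma sdiff_eq_self (n m j : ℕ) (hm : 3 ≤ m) (i : ℕ) (h : j * (m + 1) < i) :
    Sset n m i \ Fset n m j = Sset n m i := by
  ext a
  simp only [Finset.mem_sdiff, memS, memF]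
  constructor
  · rintro ⟨hw, _⟩; exact hw
  · intro hw
    refine ⟨hw, ?_⟩
    rintro ⟨l', ⟨hl'1, hl'2⟩, hl'3⟩
    have k1 : 1 * (m + 1) ≤ l' * (m + 1) := Nat.mul_le_mul_right _ hl'1
    have k2 : l' * (m + 1) ≤ j * (m + 1) := Nat.mul_le_mul_right _ hl'2
    omega

/-- If `i = l(m+1)` with `1 ≤ l`, the window of `u_i` misses `F`. -/
lemma sdiff_eq_self' (n m j : ℕ) (hm : 3 ≤ m) (l : ℕ) (hl : 1 ≤ l) :
    Sset n m (l * (m + 1)) \ Fset n m j = Sset n m (l * (m + 1)) := by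
  have e1 : (l + 1) * (m + 1) = l * (m + 1) + (m + 1) := by ring
  have e2 : (l + 2) * (m + 1) = l * (m + 1) + 2 * (m + 1) := by ring
  ext a
  simp only [Finset.mem_sdiff, memS, memF]
  constructor
  · rintro ⟨hw, _⟩; exact hw
  · intro hw
    refine ⟨hw, ?_⟩
    rintro ⟨l', ⟨hl'1, hl'2⟩, hl'3⟩
    have k1 : 1 * (m + 1) ≤ l' * (m + 1) := Nat.mul_le_mul_right _ hl'1
    have hlt1 : l * (m + 1) < l' * (m + 1) := by omega
    have c1 := (Nat.mul_lt_mul_right (show 0 < m + 1 by omega)).mp hlt1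
    have hle2 : l' ≤ l + 1 := by
      by_contra hc
      have := Nat.mul_le_mul_right (m + 1) (show l + 2 ≤ l' by omega)
      omega
    have hll : l' = l + 1 := by omega
    subst hll
    omega

/-- `u_{l(m+1)-1}/x_{l(m+1)-1}` divides `u_{l(m+1)}`. -/
lemma D_subset (n m : ℕ) (hm : 3 ≤ m) (l : ℕ) (hl : 1 ≤ l) :
    Dset n m (l * (m + 1) - 1) (l * (m + 1) - 1) ⊆ Sset n m (l * (m + 1)) := by
  intro a ha
  rw [memD] at ha
  rw [memS]
  have k1 : 1 * (m + 1) ≤ l * (m + 1) := Nat.mul_le_mul_right _ hl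
  omega

/-- For `m ≥ 3`, `n ≥ 2m`, `k = ⌊(n+1)/(m+1)⌋` and `1 ≤ j ≤ k-1`, with
`L_j = (I_{n,m} : x_m x_{2m+1} ⋯ x_{j(m+1)-1})`, the ideal
`U_{j+1} = L_j + (x_{(j+1)(m+1)-1})` is generated by the monomials
`u_i / x_{(l+1)(m+1)-1}` for `0 ≤ l ≤ j-1` and `l(m+1)+1 ≤ i ≤ (l+1)(m+1)-1`,
the variable `x_{(j+1)(m+1)-1}`, and the monomials `u_i` for `(j+1)(m+1) ≤ i ≤ n-m+1`. -/
theorem stmt_11 (K : Type) [Field K] (n m : ℕ) (hm : 3 ≤ m) (hn : 2 * m ≤ n)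
    (k : ℕ) (hk : k = (n + 1) / (m + 1)) (j : ℕ) (hj : 1 ≤ j) (hjk : j + 1 ≤ k) :
    (pathIdeal K n m).colon
        (Ideal.span {∏ l ∈ Finset.Icc 1 j, xv K n (l * (m + 1) - 1)}) +
      Ideal.span {xv K n ((j + 1) * (m + 1) - 1)} =
      Ideal.span
        ({q | ∃ l i : ℕ, l + 1 ≤ j ∧ l * (m + 1) + 1 ≤ i ∧ i ≤ (l + 1) * (m + 1) - 1 ∧
            q = pathGenDiv K n m i ((l + 1) * (m + 1) - 1)} ∪
          {xv K n ((j + 1) * (m + 1) - 1)} ∪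
          {q | ∃ i : ℕ, (j + 1) * (m + 1) ≤ i ∧ i ≤ n - m + 1 ∧ q = pathGen K n m i}) := by
  classical
  have hB1 : (j + 1) * (m + 1) ≤ n + 1 := by
    rw [hk] at hjk
    exact (Nat.le_div_iff_mul_le (by omega)).mp hjk
  have hmulj : j * (m + 1) + (m + 1) = (j + 1) * (m + 1) := by ring
  have hm1 : 1 * (m + 1) ≤ (j + 1) * (m + 1) := Nat.mul_le_mul_right _ (by omega)
  have hBlo : 1 ≤ (j + 1) * (m + 1) - 1 := by omega
  have hBhi : (j + 1) * (m + 1) - 1 ≤ n := by omega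
  -- the three generator exponent sets
  set EI : Set (Fin n →₀ ℕ) :=
    {e | ∃ i, 1 ≤ i ∧ i ≤ n - m + 1 ∧ e = ind (Sset n m i)} with hEIdef
  set EA : Set (Fin n →₀ ℕ) :=
    {e | ∃ l i : ℕ, l + 1 ≤ j ∧ l * (m + 1) + 1 ≤ i ∧ i ≤ (l + 1) * (m + 1) - 1 ∧
      e = ind (Dset n m i ((l + 1) * (m + 1) - 1))} with hEAdef
  set EC : Set (Fin n →₀ ℕ) :=
    {e | ∃ i, (j + 1) * (m + 1) ≤ i ∧ i ≤ n - m + 1 ∧ e = ind (Sset n m i)} with hECdef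
  set Bf : Fin n := (⟨(j + 1) * (m + 1) - 1 - 1, by omega⟩ : Fin n) with hBfdef
  -- rewrite the path ideal as a monomial ideal
  have hPI : pathIdeal K n m = Ideal.span ((fun e => monomial e (1:K)) '' EI) := by
    rw [pathIdeal]
    congr 1
    ext q
    constructor
    · rintro ⟨i, h1, h2, rfl⟩
      exact ⟨ind (Sset n m i), ⟨i, h1, h2, rfl⟩, (pathGen_eq K n m i).symm⟩
    · rintro ⟨e, ⟨i, h1, h2, rfl⟩, rfl⟩
      exact ⟨i, h1, h2, (pathGen_eq K n m i).symm⟩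
  -- rewrite f as a monomial
  have hf : (∏ l ∈ Finset.Icc 1 j, xv K n (l * (m + 1) - 1))
      = monomial (ind (Fset n m j)) (1 : K) := by
    rw [← prod_X_ind]
    have key : ∀ l, 1 ≤ l → l ≤ j →
        l * (m + 1) - 2 < n ∧ 1 ≤ l * (m + 1) - 1 ∧ l * (m + 1) - 1 ≤ n := by
      intro l h1 h2
      have k1 : 1 * (m + 1) ≤ l * (m + 1) := Nat.mul_le_mul_right _ h1
      have k2 : l * (m + 1) ≤ j * (m + 1) := Nat.mul_le_mul_right _ h2
      omega
    refine Finset.prod_bij (fun l hl => (⟨l * (m + 1) - 2,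
        (key l (Finset.mem_Icc.mp hl).1 (Finset.mem_Icc.mp hl).2).1⟩ : Fin n)) ?_ ?_ ?_ ?_
    · intro l hl
      simp only [Fset, Finset.mem_filter, Finset.mem_univ, true_and]
      refine ⟨l, hl, ?_⟩
      have := key l (Finset.mem_Icc.mp hl).1 (Finset.mem_Icc.mp hl).2
      omega
    · intro l1 hl1 l2 hl2 h
      simp only [Fin.mk.injEq] at h
      have b1 := key l1 (Finset.mem_Icc.mp hl1).1 (Finset.mem_Icc.mp hl1).2
      have b2 := key l2 (Finset.mem_Icc.mp hl2).1 (Finset.mem_Icc.mp hl2).2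
      have : l1 * (m + 1) = l2 * (m + 1) := by omega
      exact Nat.eq_of_mul_eq_mul_right (by omega) this
    · intro a ha
      simp only [Fset, Finset.mem_filter, Finset.mem_univ, true_and] at ha
      obtain ⟨l, hl, hal⟩ := ha
      refine ⟨l, hl, ?_⟩
      refine Fin.ext ?_
      show l * (m + 1) - 2 = (a : ℕ)
      have := key l (Finset.mem_Icc.mp hl).1 (Finset.mem_Icc.mp hl).2
      omega
    · intro l hl
      have b := key l (Finset.mem_Icc.mp hl).1 (Finset.mem_Icc.mp hl).2
      rw [xv, dif_pos ⟨b.2.1, b.2.2⟩]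
      refine congrArg X (Fin.ext ?_)
      show l * (m + 1) - 1 - 1 = l * (m + 1) - 2
      omega
  -- rewrite the three right-hand generator sets
  have cB : ({xv K n ((j + 1) * (m + 1) - 1)} : Set (MvPolynomial (Fin n) K))
      = (fun e => monomial e (1:K)) '' {ind {Bf}} := by
    rw [Set.image_singleton, xv_eq K n _ hBlo hBhi]
  have cA : {q | ∃ l i : ℕ, l + 1 ≤ j ∧ l * (m + 1) + 1 ≤ i ∧ i ≤ (l + 1) * (m + 1) - 1 ∧
        q = pathGenDiv K n m i ((l + 1) * (m + 1) - 1)}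
      = (fun e => monomial e (1:K)) '' EA := by
    ext q
    constructor
    · rintro ⟨l, i, h1, h2, h3, rfl⟩
      exact ⟨_, ⟨l, i, h1, h2, h3, rfl⟩, (pathGenDiv_eq K n m i _).symm⟩
    · rintro ⟨e, ⟨l, i, h1, h2, h3, rfl⟩, rfl⟩
      exact ⟨l, i, h1, h2, h3, (pathGenDiv_eq K n m i _).symm⟩
  have cC : {q | ∃ i : ℕ, (j + 1) * (m + 1) ≤ i ∧ i ≤ n - m + 1 ∧ q = pathGen K n m i}
      = (fun e => monomial e (1:K)) '' EC := by
    ext q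
    constructor
    · rintro ⟨i, h1, h2, rfl⟩
      exact ⟨_, ⟨i, h1, h2, rfl⟩, (pathGen_eq K n m i).symm⟩
    · rintro ⟨e, ⟨i, h1, h2, rfl⟩, rfl⟩
      exact ⟨i, h1, h2, (pathGen_eq K n m i).symm⟩
  rw [hPI, hf, colon_monomial, cA, cB, cC, Submodule.add_eq_sup, ← Ideal.span_union,
    ← Set.image_union, ← Set.image_union, ← Set.image_union]
  refine le_antisymm (span_mono_div ?_) (span_mono_div ?_)
  · -- every L_j + (x_B) generator is a multiple of a right-hand generator
    rintro e (⟨e0, ⟨i, h1, h2, rfl⟩, rfl⟩ | he)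
    · -- e = ind (Sset i) - ind Fset
      rw [show (fun x => x - ind (Fset n m j)) (ind (Sset n m i))
          = ind (Sset n m i \ Fset n m j) from ind_sub _ _]
      obtain ⟨qq, rr, hqr, hrlt⟩ : ∃ q r, i = q * (m + 1) + r ∧ r < m + 1 := by
        have h0 := Nat.div_add_mod i (m + 1)
        rw [Nat.mul_comm] at h0
        exact ⟨_, _, h0.symm, Nat.mod_lt _ (by omega)⟩
      by_cases hd : (j + 1) * (m + 1) ≤ i
      · refine ⟨ind (Sset n m i), Or.inr ⟨i, hd, h2, rfl⟩, ?_⟩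
        rw [sdiff_eq_self n m j hm i (by omega)]
      · by_cases hc : j * (m + 1) < i
        · refine ⟨ind {Bf}, Or.inl (Or.inr rfl), ?_⟩
          refine ind_le_ind (Finset.singleton_subset_iff.mpr ?_)
          rw [Finset.mem_sdiff, memS, memF]
          constructor
          · show i ≤ (j + 1) * (m + 1) - 1 - 1 + 1 ∧ (j + 1) * (m + 1) - 1 - 1 + 1 < i + m
            omega
          · rintro ⟨l', ⟨hl'1, hl'2⟩, hl'3⟩
            have k1 : 1 * (m + 1) ≤ l' * (m + 1) := Nat.mul_le_mul_right _ hl'1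
            have k2 : l' * (m + 1) ≤ j * (m + 1) := Nat.mul_le_mul_right _ hl'2
            have : ((Bf : Fin n) : ℕ) + 1 = (j + 1) * (m + 1) - 1 - 1 + 1 := rfl
            omega
        · -- i ≤ j * (m+1)
          by_cases hr0 : rr = 0
          · -- i = qq*(m+1) with 1 ≤ qq ≤ j
            have hq1 : 1 ≤ qq := by
              rcases Nat.eq_zero_or_pos qq with h | h
              · subst h; simp at hqr; omega
              · exact h
            obtain ⟨l₁, rfl⟩ : ∃ l₁, qq = l₁ + 1 := ⟨qq - 1, by omega⟩
            have hqj : l₁ + 1 ≤ j := by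
              by_contra hcq
              have := Nat.mul_le_mul_right (m + 1) (show j + 1 ≤ l₁ + 1 by omega)
              omega
            have e1 : (l₁ + 1) * (m + 1) = l₁ * (m + 1) + (m + 1) := by ring
            have hieq : i = (l₁ + 1) * (m + 1) := by omega
            subst hieq
            refine ⟨ind (Dset n m ((l₁ + 1) * (m + 1) - 1) ((l₁ + 1) * (m + 1) - 1)),
              Or.inl (Or.inl ⟨l₁, (l₁ + 1) * (m + 1) - 1, hqj, by omega, by omega, rfl⟩), ?_⟩
            rw [sdiff_eq_self' n m j hm (l₁ + 1) (by omega)]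
            exact ind_le_ind (D_subset n m hm (l₁ + 1) (by omega))
          · -- i strictly inside an interval
            have hql : qq * (m + 1) < j * (m + 1) := by omega
            have hqj := (Nat.mul_lt_mul_right (show 0 < m + 1 by omega)).mp hql
            have e1 : (qq + 1) * (m + 1) = qq * (m + 1) + (m + 1) := by ring
            refine ⟨ind (Dset n m i ((qq + 1) * (m + 1) - 1)),
              Or.inl (Or.inl ⟨qq, i, by omega, by omega, by omega, rfl⟩), ?_⟩
            rw [sdiff_eq_D n m j hm qq i (by omega) (by omega) (by omega)]
    · -- e = ind {Bf}
      rw [Set.mem_singleton_iff] at he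
      subst he
      exact ⟨ind {Bf}, Or.inl (Or.inr rfl), le_rfl⟩
  · -- every right-hand generator lies in L_j + (x_B)
    rintro e ((⟨l, i, h1, h2, h3, rfl⟩ | he) | ⟨i, h1, h2, rfl⟩)
    · -- A-generators
      have k2 : (l + 1) * (m + 1) ≤ j * (m + 1) := Nat.mul_le_mul_right _ h1
      have k1 : 1 * (m + 1) ≤ (l + 1) * (m + 1) := Nat.mul_le_mul_right _ (by omega)
      refine ⟨ind (Sset n m i) - ind (Fset n m j),
        Or.inl ⟨ind (Sset n m i), ⟨i, by omega, by omega, rfl⟩, rfl⟩, ?_⟩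
      rw [ind_sub, sdiff_eq_D n m j hm l i h1 h2 h3]
    · -- x_B
      rw [Set.mem_singleton_iff] at he
      subst he
      exact ⟨ind {Bf}, Or.inr rfl, le_rfl⟩
    · -- C-generators
      refine ⟨ind (Sset n m i) - ind (Fset n m j),
        Or.inl ⟨ind (Sset n m i), ⟨i, by omega, h2, rfl⟩, rfl⟩, ?_⟩
      rw [ind_sub, sdiff_eq_self n m j hm i (by omega)]
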